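/- For all natural numbers n ≥ 0, ∑_{i=1}^n H_i/i = (1/2)·(H_n² + H_n^{(2)}). -/

import Mathlib

/-- The `n`-th harmonic number `H_n = ∑_{k=1}^n 1/k` in `ℚ`. -/
def H (n : ℕ) : ℚ := ∑ k ∈ Finset.Icc 1 n, (1 : ℚ) / k

/-- The generalized harmonic number of order `o`, `H_n^{(o)} = ∑_{k=1}^n 1/k^o` in `ℚ`. -/
def Hgen (o n : ℕ) : ℚ := ∑ k ∈ Finset.Icc 1 n, (1 : ℚ) / (k : ℚ) ^ o

theorem stmt1 (n : ℕ) :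
    ∑ i ∈ Finset.Icc 1 n, H i / (i : ℚ) = (1 / 2) * ((H n) ^ 2 + Hgen 2 n) := by
  induction n with
  | zero => simp [H, Hgen]
  | succ n ih =>
    have h1 : H (n + 1) = H n + 1 / (n + 1 : ℚ) := by
      rw [H, H, Finset.sum_Icc_succ_top (by omega)]; push_cast; ring
    have h2 : Hgen 2 (n + 1) = Hgen 2 n + 1 / (n + 1 : ℚ) ^ 2 := by
      rw [Hgen, Hgen, Finset.sum_Icc_succ_top (by omega)]; push_cast; ring
    rw [Finset.sum_Icc_succ_top (by omega), ih, h1, h2]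
    have hn : (n:ℚ)+1 ≠ 0 := by positivity
    push_cast
    field_simp
    ring
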